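/- Let p be a prime, s > 0, and let F ⊆ ℤ_p be a closed set with ℋ^s(F) < ∞. Assume there is an ℋ^s-integrable function g such that η_s(F;x,n) ≤ g(x) for all n and for ℋ^s-almost all x ∈ F. Let θ̲*^s(F) = limsup_{n→∞} min_{a ∈ G_n} ℋ^s(F ∩ B_{p^{-n}}(a)) / p^{-ns}, where G_n is the set of residues a ∈ ℤ/p^nℤ whose ball B_{p^{-n}}(a) meets F. Then θ̲*^s(F) · ℋ_s(F ∩ ℤ) ≤ ∫_F η_s(F;x) dℋ^s(x). -/

import Mathlib

open MeasureTheory Filter Set Metric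
open scoped ENNReal NNReal

noncomputable section

/-- Number of elements of `E` in the integer interval `(M, M+n]`. -/
def cnt (E : Set ℤ) (M : ℤ) (n : ℕ) : ℕ := (E ∩ Set.Ioc M (M + n)).ncard

/-- The `s`-counting measure `ℋ_s(E) = limsup_{|I|→∞} |E ∩ I| / |I|^s`,
where `I` ranges over integer intervals `(M, N]`. -/
def countingMeasure (s : ℝ) (E : Set ℤ) : ℝ≥0∞ :=
  Filter.atTop.limsup fun n : ℕ => ⨆ M : ℤ, (cnt E M n : ℝ≥0∞) / (n : ℝ≥0∞) ^ s

/-- The upper Banach density `d*(E) = limsup_{|I|→∞} |E ∩ I| / |I|`. -/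
def upperBanachDensity (E : Set ℤ) : ℝ≥0∞ := countingMeasure 1 E

variable (p : ℕ) [Fact p.Prime]

instance : MeasurableSpace ℤ_[p] := borel ℤ_[p]
instance : BorelSpace ℤ_[p] := ⟨rfl⟩

/-- Projection `Π_p(F) = F ∩ ℤ` of a set `F ⊆ ℤ_p`, as a set of integers. -/
def proj (F : Set ℤ_[p]) : Set ℤ := {m : ℤ | (m : ℤ_[p]) ∈ F}

/-- The closed ball of radius `p^{-n}` around `x` in `ℤ_p`. -/
def pball (x : ℤ_[p]) (n : ℕ) : Set ℤ_[p] := Metric.closedBall x ((p : ℝ) ^ (-(n : ℤ)))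

/-- `limsup_{|I|→∞} |A ∩ B ∩ I| / |B ∩ I|^s` for sets of integers `A, B`. -/
def relCount (s : ℝ) (A B : Set ℤ) : ℝ≥0∞ :=
  Filter.atTop.limsup fun n : ℕ => ⨆ M : ℤ, (cnt (A ∩ B) M n : ℝ≥0∞) / (cnt B M n : ℝ≥0∞) ^ s

/-- `η_s(F; x, n) = limsup_{|I|→∞} |F ∩ B_{p^{-n}}(x) ∩ I| / |B_{p^{-n}}(x) ∩ I|^s`. -/
def etaN (s : ℝ) (F : Set ℤ_[p]) (x : ℤ_[p]) (n : ℕ) : ℝ≥0∞ :=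
  relCount s (proj p F) (proj p (pball p x n))

/-- The `s`-counting local measure `η_s(F; x) = limsup_{n→∞} η_s(F; x, n)`. -/
def eta (s : ℝ) (F : Set ℤ_[p]) (x : ℤ_[p]) : ℝ≥0∞ :=
  Filter.atTop.limsup fun n : ℕ => etaN p s F x n

/-- `N_{p^{-n}}(F)`: minimal number of closed balls of radius `p^{-n}` covering `F`. -/
def coverNumber (F : Set ℤ_[p]) (n : ℕ) : ℕ :=
  sInf {k : ℕ | ∃ t : Finset ℤ_[p], t.card = k ∧
    F ⊆ ⋃ x ∈ t, Metric.closedBall x ((p : ℝ) ^ (-(n : ℤ)))}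

/-- Upper box-counting dimension of `F ⊆ ℤ_p`. -/
def upperBoxDim (F : Set ℤ_[p]) : ℝ :=
  Filter.atTop.limsup fun n : ℕ => Real.log (coverNumber p F n) / (n * Real.log p)

/-- Lower box-counting dimension of `F ⊆ ℤ_p`. -/
def lowerBoxDim (F : Set ℤ_[p]) : ℝ :=
  Filter.atTop.liminf fun n : ℕ => Real.log (coverNumber p F n) / (n * Real.log p)

/-- Maximal number of points of `E` in an integer interval of length `n`. -/
def maxCnt (E : Set ℤ) (n : ℕ) : ℕ := sSup {k : ℕ | ∃ M : ℤ, cnt E M n = k}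

/-- The counting dimension `D(E) = limsup_{|I|→∞} log |E ∩ I| / log |I|`. -/
def countingDim (E : Set ℤ) : ℝ :=
  Filter.atTop.limsup fun n : ℕ => Real.log (maxCnt E n) / Real.log n

/-- `θ̲*^s(F) = limsup_n min_{a ∈ G_n} ℋ^s(F ∩ B_{p^{-n}}(a)) / p^{-ns}`, where the
minimum runs over residues `a` whose ball `B_{p^{-n}}(a)` meets `F`. -/
def thetaStar (s : ℝ) (F : Set ℤ_[p]) : ℝ≥0∞ :=
  Filter.atTop.limsup fun n : ℕ =>
    ⨅ (a : ℤ) (_ : (pball p (a : ℤ_[p]) n ∩ F).Nonempty),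
      μH[s] (F ∩ pball p (a : ℤ_[p]) n) / (p : ℝ≥0∞) ^ (-((n : ℝ) * s))

/-- A finite arithmetic progression in `ℤ` with common difference `d`. -/
def IsAPWithDiff (A : Set ℤ) (d : ℤ) : Prop :=
  ∃ a : ℤ, ∃ L : ℕ, A = (fun i : ℕ => a + d * (i : ℤ)) '' {i : ℕ | i < L}

end

noncomputable section AuxLemmasForTheoremC
variable {p : ℕ} [Fact p.Prime]

lemma mem_pball_iff (x y : ℤ_[p]) (n : ℕ) : y ∈ pball p x n ↔ ‖y - x‖ ≤ (p:ℝ) ^ (-(n:ℤ)) := by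
  simp [pball, Metric.mem_closedBall, dist_eq_norm]

lemma mem_pball_comm (x y : ℤ_[p]) (n : ℕ) : y ∈ pball p x n ↔ x ∈ pball p y n := by
  rw [mem_pball_iff, mem_pball_iff, norm_sub_rev]

lemma int_mem_pball_iff (a m : ℤ) (n : ℕ) :
    (m : ℤ_[p]) ∈ pball p (a : ℤ_[p]) n ↔ ((p:ℤ) ^ n ∣ m - a) := by
  rw [mem_pball_iff]
  have : ((m : ℤ_[p]) - (a : ℤ_[p])) = ((m - a : ℤ) : ℤ_[p]) := by push_cast; ring
  rw [this, PadicInt.norm_int_le_pow_iff_dvd]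

lemma pball_eq_of_mem {x y : ℤ_[p]} {n : ℕ} (h : y ∈ pball p x n) :
    pball p y n = pball p x n := by
  have key : ∀ u v w : ℤ_[p], ‖u - v‖ ≤ (p:ℝ) ^ (-(n:ℤ)) → ‖v - w‖ ≤ (p:ℝ) ^ (-(n:ℤ)) →
      ‖u - w‖ ≤ (p:ℝ) ^ (-(n:ℤ)) := by
    intro u v w h1 h2
    have h3 : u - w = (u - v) + (v - w) := by ring
    rw [h3]
    exact (PadicInt.nonarchimedean _ _).trans (max_le h1 h2)
  rw [mem_pball_iff] at h
  ext z
  rw [mem_pball_iff, mem_pball_iff]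
  constructor
  · intro hz; exact key _ _ _ hz h
  · intro hz
    have h' : ‖x - y‖ ≤ (p:ℝ) ^ (-(n:ℤ)) := by rwa [norm_sub_rev] at h
    exact key _ _ _ hz h'

lemma exists_mem_pball (x : ℤ_[p]) (n : ℕ) :
    ∃ a : ℕ, a < p ^ n ∧ x ∈ pball p (a : ℤ_[p]) n := by
  refine ⟨x.appr n, PadicInt.appr_lt x n, ?_⟩
  rw [mem_pball_iff, PadicInt.norm_le_pow_iff_mem_span_pow]
  exact PadicInt.appr_spec n x

lemma pball_unique {a b : ℕ} {n : ℕ} (ha : a < p ^ n) (hb : b < p ^ n) {x : ℤ_[p]}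
    (hxa : x ∈ pball p (a : ℤ_[p]) n) (hxb : x ∈ pball p (b : ℤ_[p]) n) : a = b := by
  have hax : (a : ℤ_[p]) ∈ pball p x n := (mem_pball_comm _ _ _).mp hxa
  have hab : ((a : ℤ) : ℤ_[p]) ∈ pball p ((b : ℤ) : ℤ_[p]) n := by
    push_cast
    rw [← pball_eq_of_mem hxb]
    exact hax
  rw [int_mem_pball_iff] at hab
  have h0 : (a : ℤ) - b = 0 := by
    apply Int.eq_zero_of_abs_lt_dvd hab
    have h1 : ((p:ℤ))^n = ((p^n : ℕ) : ℤ) := by push_cast; ring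
    rw [h1]
    have : |(a:ℤ) - b| < ((p^n : ℕ) : ℤ) := abs_sub_lt_iff.mpr ⟨by omega, by omega⟩
    exact this
  omega

lemma ncard_biUnion_le {α ι : Type*} (t : Finset ι) (f : ι → Set α) :
    (⋃ i ∈ t, f i).ncard ≤ ∑ i ∈ t, (f i).ncard := by
  classical
  induction t using Finset.induction with
  | empty => simp
  | @insert a s h ih =>
    rw [Finset.set_biUnion_insert, Finset.sum_insert h]
    exact (Set.ncard_union_le _ _).trans (by gcongr)

lemma cnt_mono {A B : Set ℤ} (h : A ⊆ B) (M : ℤ) (n : ℕ) : cnt A M n ≤ cnt B M n :=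
  Set.ncard_le_ncard (Set.inter_subset_inter_left _ h)
    ((Set.finite_Ioc _ _).subset Set.inter_subset_right)

lemma cnt_ap_mul_le (a : ℤ) (q : ℤ) (hq : 0 < q) (M : ℤ) (n' : ℕ) :
    (cnt {m : ℤ | q ∣ m - a} M n' : ℤ) * q ≤ n' + q := by
  set K := (M - a) / q with hKdef
  set L := (M + n' - a) / q with hLdef
  have hK1 : q * K + (M - a) % q = M - a := Int.mul_ediv_add_emod _ _
  have hK2 : 0 ≤ (M - a) % q := Int.emod_nonneg _ hq.ne'
  have hK3 : (M - a) % q < q := Int.emod_lt_of_pos _ hq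
  have hL1 : q * L + (M + n' - a) % q = M + n' - a := Int.mul_ediv_add_emod _ _
  have hL2 : 0 ≤ (M + n' - a) % q := Int.emod_nonneg _ hq.ne'
  have hL3 : (M + n' - a) % q < q := Int.emod_lt_of_pos _ hq
  have hset : {m : ℤ | q ∣ m - a} ∩ Set.Ioc M (M + n') = (fun k => a + q * k) '' Set.Ioc K L := by
    ext m
    simp only [Set.mem_inter_iff, Set.mem_setOf_eq, Set.mem_Ioc, Set.mem_image]
    constructor
    · rintro ⟨⟨k, hk⟩, h1, h2⟩
      refine ⟨k, ⟨?_, ?_⟩, by omega⟩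
      · have : q * K < q * k := by omega
        exact lt_of_mul_lt_mul_left this hq.le
      · have : q * k < q * (L + 1) := by rw [mul_add]; omega
        have := lt_of_mul_lt_mul_left this hq.le
        omega
    · rintro ⟨k, ⟨hk1, hk2⟩, rfl⟩
      have e1 : q * (K + 1) ≤ q * k := by
        apply mul_le_mul_of_nonneg_left (by omega) hq.le
      rw [mul_add] at e1
      have e2 : q * k ≤ q * L := mul_le_mul_of_nonneg_left hk2 hq.le
      exact ⟨⟨k, by ring⟩, by omega, by omega⟩
  have hcard : cnt {m : ℤ | q ∣ m - a} M n' = (L - K).toNat := by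
    have hinj : Function.Injective (fun k : ℤ => a + q * k) := by
      intro x y hxy
      simp only at hxy
      have : q * x = q * y := by omega
      exact mul_left_cancel₀ hq.ne' this
    rw [cnt, hset, Set.ncard_image_of_injective _ hinj, ← Finset.coe_Ioc, Set.ncard_coe_finset,
      Int.card_Ioc]
  rw [hcard]
  have hb : q * (L - K) ≤ n' + q := by rw [mul_sub]; omega
  rcases le_or_gt (L - K) 0 with h | h
  · have : ((L - K).toNat : ℤ) = 0 := by omega
    rw [this, zero_mul]; positivity
  · have : ((L - K).toNat : ℤ) = L - K := by omega
    rw [this]; linarith [hb]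


lemma ennreal_limsup_add_le (u v : ℕ → ℝ≥0∞) :
    Filter.atTop.limsup (fun n => u n + v n) ≤ Filter.atTop.limsup u + Filter.atTop.limsup v := by
  by_cases hu : Filter.atTop.limsup u = ⊤
  · rw [hu, top_add]; exact le_top
  by_cases hv : Filter.atTop.limsup v = ⊤
  · rw [hv, add_top]; exact le_top
  apply ENNReal.le_of_forall_pos_le_add
  intro ε hε _
  have hε2 : (0:ℝ≥0∞) < (ε:ℝ≥0∞) / 2 := by
    simp [ENNReal.div_pos_iff, hε.ne']
  have hu' : Filter.atTop.limsup u < Filter.atTop.limsup u + ε/2 :=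
    ENNReal.lt_add_right hu hε2.ne'
  have hv' : Filter.atTop.limsup v < Filter.atTop.limsup v + ε/2 :=
    ENNReal.lt_add_right hv hε2.ne'
  have h1 := Filter.eventually_lt_of_limsup_lt hu'
  have h2 := Filter.eventually_lt_of_limsup_lt hv'
  have : ∀ᶠ n in Filter.atTop, u n + v n ≤
      (Filter.atTop.limsup u + Filter.atTop.limsup v) + ε := by
    filter_upwards [h1, h2] with n h1n h2n
    calc u n + v n ≤ (Filter.atTop.limsup u + ε/2) + (Filter.atTop.limsup v + ε/2) :=
          add_le_add h1n.le h2n.le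
      _ = (Filter.atTop.limsup u + Filter.atTop.limsup v) + (ε/2 + ε/2) := by ring
      _ = (Filter.atTop.limsup u + Filter.atTop.limsup v) + ε := by rw [ENNReal.add_halves]
  exact Filter.limsup_le_of_le (by isBoundedDefault) this

lemma ennreal_limsup_sum_le {ι : Type*} (t : Finset ι) (f : ι → ℕ → ℝ≥0∞) :
    Filter.atTop.limsup (fun n => ∑ i ∈ t, f i n) ≤ ∑ i ∈ t, Filter.atTop.limsup (f i) := by
  classical
  induction t using Finset.induction with
  | empty => simp [Filter.limsup_const]
  | @insert a s h ih =>
    simp only [Finset.sum_insert h]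
    exact (ennreal_limsup_add_le _ _).trans (by gcongr)

lemma rpow_ne_zero' {x : ℝ≥0∞} (h0 : x ≠ 0) (ht : x ≠ ⊤) (s : ℝ) : x ^ s ≠ 0 := by
  simp [ENNReal.rpow_eq_zero_iff, h0, ht]

lemma proj_pball_eq (a : ℤ) (n : ℕ) :
    proj p (pball p (a : ℤ_[p]) n) = {m : ℤ | (p:ℤ)^n ∣ m - a} := by
  ext m
  exact int_mem_pball_iff a m n

lemma countingMeasure_le_sum (s : ℝ) (hs : 0 < s) (F : Set ℤ_[p]) (n : ℕ) :
    countingMeasure s (proj p F) ≤ (((p^n : ℕ) : ℝ≥0∞))⁻¹ ^ s *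
      ∑ a ∈ Finset.range (p^n), etaN p s F (a : ℤ_[p]) n := by
  classical
  have hp1 : 1 < p := (Fact.out (p := p.Prime)).one_lt
  set q : ℕ := p ^ n with hqdef
  have hq0 : 0 < q := Nat.pow_pos (n := n) (by omega)
  set A : Set ℤ := proj p F with hA
  set Bs : ℕ → Set ℤ := fun a => proj p (pball p ((a:ℕ) : ℤ_[p]) n) with hBs
  set S : ℕ → ℕ → ℝ≥0∞ := fun a n' =>
    ⨆ M : ℤ, (cnt (A ∩ Bs a) M n' : ℝ≥0∞) / (cnt (Bs a) M n' : ℝ≥0∞) ^ s with hSdef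
  set T : ℕ → ℝ≥0∞ := fun n' => ∑ a ∈ Finset.range q, S a n' with hTdef
  set b : ℕ → ℝ≥0∞ := fun n' => ((q:ℝ≥0∞)⁻¹ + ((n':ℕ):ℝ≥0∞)⁻¹) ^ s with hbdef
  have hqne : (q : ℝ≥0∞) ≠ 0 := by exact_mod_cast hq0.ne'
  have hqtop : (q : ℝ≥0∞) ≠ ⊤ := ENNReal.natCast_ne_top q
  -- the AP description of Bs a
  have hBseq : ∀ a : ℕ, Bs a = {m : ℤ | (p:ℤ)^n ∣ m - (a:ℤ)} := by
    intro a
    simp only [hBs]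
    have hcast : ((a:ℕ) : ℤ_[p]) = (((a:ℤ)) : ℤ_[p]) := by push_cast; ring
    rw [hcast, proj_pball_eq]
  -- covering
  have hcover : ∀ (M : ℤ) (n' : ℕ), cnt A M n' ≤ ∑ a ∈ Finset.range q, cnt (A ∩ Bs a) M n' := by
    intro M n'
    have hsub : A ∩ Set.Ioc M (M + n') ⊆
        ⋃ a ∈ Finset.range q, ((A ∩ Bs a) ∩ Set.Ioc M (M + n')) := by
      intro m hm
      have hq0' : (0:ℤ) < (q:ℤ) := by exact_mod_cast hq0
      have h1 : 0 ≤ m % (q:ℤ) := Int.emod_nonneg _ hq0'.ne'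
      have h2 : m % (q:ℤ) < q := Int.emod_lt_of_pos _ hq0'
      set r : ℕ := (m % (q:ℤ)).toNat with hrdef
      have hr : (r:ℤ) = m % (q:ℤ) := Int.toNat_of_nonneg h1
      have hrq : r < q := by omega
      refine Set.mem_biUnion (Finset.mem_range.mpr hrq) ⟨⟨hm.1, ?_⟩, hm.2⟩
      rw [hBseq r]
      have hd := Int.mul_ediv_add_emod m (q:ℤ)
      have hpq : ((p:ℤ))^n = ((q:ℕ):ℤ) := by rw [hqdef]; push_cast; ring
      show ((p:ℤ))^n ∣ m - (r:ℤ)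
      rw [hpq, hr]
      exact ⟨m / (q:ℤ), by linarith⟩
    calc cnt A M n' ≤ (⋃ a ∈ Finset.range q, ((A ∩ Bs a) ∩ Set.Ioc M (M + n'))).ncard := by
          exact Set.ncard_le_ncard hsub (((Set.finite_Ioc M (M + n')).subset
            (Set.iUnion₂_subset fun a _ => Set.inter_subset_right)).subset (by rfl))
      _ ≤ ∑ a ∈ Finset.range q, ((A ∩ Bs a) ∩ Set.Ioc M (M + n')).ncard :=
          ncard_biUnion_le _ _
      _ = ∑ a ∈ Finset.range q, cnt (A ∩ Bs a) M n' := rfl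
  -- per-term bound
  have hterm : ∀ n' : ℕ, 1 ≤ n' → ∀ M : ℤ, ∀ a, a ∈ Finset.range q →
      (cnt (A ∩ Bs a) M n' : ℝ≥0∞) / ((n':ℕ) : ℝ≥0∞) ^ s ≤ b n' * S a n' := by
    intro n' hn' M a _
    have hn'ne : ((n':ℕ) : ℝ≥0∞) ≠ 0 := by
      simp only [ne_eq, Nat.cast_eq_zero]; omega
    have hn'top : ((n':ℕ) : ℝ≥0∞) ≠ ⊤ := ENNReal.natCast_ne_top n'
    have hn'sne : (((n':ℕ) : ℝ≥0∞)) ^ s ≠ 0 := rpow_ne_zero' hn'ne hn'top s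
    have hn'stop : (((n':ℕ) : ℝ≥0∞)) ^ s ≠ ⊤ := ENNReal.rpow_ne_top_of_nonneg hs.le hn'top
    set x : ℕ := cnt (A ∩ Bs a) M n' with hx
    set y : ℕ := cnt (Bs a) M n' with hy
    have hxy : x ≤ y := cnt_mono Set.inter_subset_right _ _
    by_cases hy0 : y = 0
    · have hx0 : x = 0 := by omega
      simp [hx0]
    · have hyne : ((y:ℕ) : ℝ≥0∞) ≠ 0 := by
        simp only [ne_eq, Nat.cast_eq_zero]; omega
      have hytop : ((y:ℕ) : ℝ≥0∞) ≠ ⊤ := ENNReal.natCast_ne_top y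
      have hysne : (((y:ℕ) : ℝ≥0∞)) ^ s ≠ 0 := rpow_ne_zero' hyne hytop s
      have hystop : (((y:ℕ) : ℝ≥0∞)) ^ s ≠ ⊤ := ENNReal.rpow_ne_top_of_nonneg hs.le hytop
      -- y * q ≤ n' + q in ℕ
      have hcntZ : ((y:ℕ) : ℤ) * ((p:ℤ))^n ≤ (n':ℕ) + ((p:ℤ))^n := by
        rw [hy, hBseq a]
        exact cnt_ap_mul_le (a:ℤ) ((p:ℤ)^n) (by positivity) M n'
      have hpq : ((p:ℤ))^n = ((q:ℕ):ℤ) := by rw [hqdef]; push_cast; ring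
      rw [hpq] at hcntZ
      have hcntN : y * q ≤ n' + q := by exact_mod_cast hcntZ
      have hcast : ((y:ℕ):ℝ≥0∞) * (q:ℝ≥0∞) ≤ ((n':ℕ):ℝ≥0∞) + (q:ℝ≥0∞) := by
        exact_mod_cast hcntN
      have hyb : ((y:ℕ):ℝ≥0∞) ≤ ((n':ℕ):ℝ≥0∞) * ((q:ℝ≥0∞)⁻¹ + ((n':ℕ):ℝ≥0∞)⁻¹) := by
        have h1 : ((y:ℕ):ℝ≥0∞) ≤ (((n':ℕ):ℝ≥0∞) + (q:ℝ≥0∞)) / (q:ℝ≥0∞) :=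
          (ENNReal.le_div_iff_mul_le (Or.inl hqne) (Or.inl hqtop)).mpr hcast
        refine h1.trans (le_of_eq ?_)
        rw [ENNReal.add_div, ENNReal.div_self hqne hqtop, mul_add,
          ENNReal.mul_inv_cancel hn'ne hn'top, div_eq_mul_inv]
      have hys : (((y:ℕ):ℝ≥0∞)) ^ s ≤ (((n':ℕ):ℝ≥0∞)) ^ s * b n' := by
        calc (((y:ℕ):ℝ≥0∞)) ^ s
            ≤ (((n':ℕ):ℝ≥0∞) * ((q:ℝ≥0∞)⁻¹ + ((n':ℕ):ℝ≥0∞)⁻¹)) ^ s :=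
              ENNReal.rpow_le_rpow hyb hs.le
          _ = (((n':ℕ):ℝ≥0∞)) ^ s * b n' := ENNReal.mul_rpow_of_nonneg _ _ hs.le
      have hdivle : (((y:ℕ):ℝ≥0∞)) ^ s / (((n':ℕ):ℝ≥0∞)) ^ s ≤ b n' := by
        rw [ENNReal.div_le_iff hn'sne hn'stop]
        rw [mul_comm]
        exact hys
      calc (x : ℝ≥0∞) / (((n':ℕ):ℝ≥0∞)) ^ s
          = ((x : ℝ≥0∞) / ((y:ℝ≥0∞)) ^ s) * ((y:ℝ≥0∞)) ^ s / (((n':ℕ):ℝ≥0∞)) ^ s := by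
            rw [ENNReal.div_mul_cancel hysne hystop]
        _ = ((x : ℝ≥0∞) / ((y:ℝ≥0∞)) ^ s) * (((y:ℝ≥0∞)) ^ s / (((n':ℕ):ℝ≥0∞)) ^ s) := by
            rw [mul_div_assoc]
        _ ≤ S a n' * b n' := by
            apply mul_le_mul' ?_ hdivle
            exact le_iSup (fun M => (cnt (A ∩ Bs a) M n' : ℝ≥0∞) / (cnt (Bs a) M n' : ℝ≥0∞) ^ s) M
        _ = b n' * S a n' := mul_comm _ _
  -- eventual bound
  have hmain : ∀ᶠ n' in Filter.atTop,
      (⨆ M : ℤ, (cnt A M n' : ℝ≥0∞) / ((n':ℕ) : ℝ≥0∞) ^ s) ≤ b n' * T n' := by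
    filter_upwards [Filter.eventually_ge_atTop 1] with n' hn'
    apply iSup_le
    intro M
    calc (cnt A M n' : ℝ≥0∞) / ((n':ℕ) : ℝ≥0∞) ^ s
        ≤ ((∑ a ∈ Finset.range q, cnt (A ∩ Bs a) M n' : ℕ) : ℝ≥0∞) / ((n':ℕ) : ℝ≥0∞) ^ s := by
          gcongr
          exact_mod_cast hcover M n'
      _ = ∑ a ∈ Finset.range q, (cnt (A ∩ Bs a) M n' : ℝ≥0∞) / ((n':ℕ) : ℝ≥0∞) ^ s := by
          rw [Nat.cast_sum]
          simp only [div_eq_mul_inv, Finset.sum_mul]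
      _ ≤ ∑ a ∈ Finset.range q, b n' * S a n' := Finset.sum_le_sum (fun a ha => hterm n' hn' M a ha)
      _ = b n' * T n' := by rw [hTdef, Finset.mul_sum]
  -- limsup of b
  have hbt : Filter.Tendsto b Filter.atTop (nhds ((q:ℝ≥0∞)⁻¹ ^ s)) := by
    have h1 : Filter.Tendsto (fun n' : ℕ => (q:ℝ≥0∞)⁻¹ + ((n':ℕ):ℝ≥0∞)⁻¹) Filter.atTop
        (nhds ((q:ℝ≥0∞)⁻¹ + 0)) :=
      Filter.Tendsto.add tendsto_const_nhds ENNReal.tendsto_inv_nat_nhds_zero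
    rw [add_zero] at h1
    exact (ENNReal.continuous_rpow_const.continuousAt).tendsto.comp h1
  have hbl : Filter.atTop.limsup b = (q:ℝ≥0∞)⁻¹ ^ s := hbt.limsup_eq
  have hcne : (q:ℝ≥0∞)⁻¹ ^ s ≠ 0 :=
    rpow_ne_zero' (by simp [ENNReal.inv_eq_zero, hqtop]) (by simp [ENNReal.inv_eq_top, hqne]) s
  have hctop : (q:ℝ≥0∞)⁻¹ ^ s ≠ ⊤ :=
    ENNReal.rpow_ne_top_of_nonneg hs.le (by simp [ENNReal.inv_eq_top, hqne])
  -- assemble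
  calc countingMeasure s A
      ≤ Filter.atTop.limsup (fun n' => b n' * T n') := Filter.limsup_le_limsup hmain
    _ = Filter.atTop.limsup (b * T) := rfl
    _ ≤ Filter.atTop.limsup b * Filter.atTop.limsup T := by
        apply ENNReal.limsup_mul_le'
        · left; rw [hbl]; exact hcne
        · left; rw [hbl]; exact hctop
    _ = (q:ℝ≥0∞)⁻¹ ^ s * Filter.atTop.limsup T := by rw [hbl]
    _ ≤ (q:ℝ≥0∞)⁻¹ ^ s * ∑ a ∈ Finset.range q, etaN p s F (a : ℤ_[p]) n := by
        apply mul_le_mul_right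
        calc Filter.atTop.limsup T ≤ ∑ a ∈ Finset.range q, Filter.atTop.limsup (S a) :=
              ennreal_limsup_sum_le _ _
          _ = ∑ a ∈ Finset.range q, etaN p s F (a : ℤ_[p]) n := by
              apply Finset.sum_congr rfl
              intro a _
              rfl

lemma etaN_const_on_pball (s : ℝ) (F : Set ℤ_[p]) {x a : ℤ_[p]} {n : ℕ}
    (h : x ∈ pball p a n) : etaN p s F x n = etaN p s F a n := by
  unfold etaN
  rw [pball_eq_of_mem h]

lemma etaN_repr (s : ℝ) (F : Set ℤ_[p]) (n : ℕ) (x : ℤ_[p]) :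
    etaN p s F x n = ∑ a ∈ Finset.range (p^n),
      (pball p ((a:ℕ) : ℤ_[p]) n).indicator (fun _ => etaN p s F ((a:ℕ) : ℤ_[p]) n) x := by
  obtain ⟨a₀, ha₀, hx₀⟩ := exists_mem_pball x n
  rw [Finset.sum_eq_single_of_mem a₀ (Finset.mem_range.mpr ha₀)]
  · rw [Set.indicator_of_mem hx₀]
    exact etaN_const_on_pball s F hx₀
  · intro b hb hba
    apply Set.indicator_of_notMem
    intro hxb
    exact hba (pball_unique (Finset.mem_range.mp hb) ha₀ hxb hx₀)

lemma etaN_measurable (s : ℝ) (F : Set ℤ_[p]) (n : ℕ) :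
    Measurable (fun x => etaN p s F x n) := by
  have : (fun x => etaN p s F x n) = fun x => ∑ a ∈ Finset.range (p^n),
      (pball p ((a:ℕ) : ℤ_[p]) n).indicator (fun _ => etaN p s F ((a:ℕ) : ℤ_[p]) n) x :=
    funext (etaN_repr s F n)
  rw [this]
  apply Finset.measurable_sum
  intro a _
  exact measurable_const.indicator measurableSet_closedBall

lemma lintegral_etaN (s : ℝ) (F : Set ℤ_[p]) (n : ℕ) :
    ∫⁻ x in F, etaN p s F x n ∂μH[s] = ∑ a ∈ Finset.range (p^n),
      etaN p s F ((a:ℕ) : ℤ_[p]) n * μH[s] (F ∩ pball p ((a:ℕ) : ℤ_[p]) n) := by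
  have hball : ∀ a : ℕ, MeasurableSet (pball p ((a:ℕ) : ℤ_[p]) n) :=
    fun a => measurableSet_closedBall
  rw [lintegral_congr (fun x => etaN_repr s F n x)]
  rw [lintegral_finset_sum _ (fun a _ => measurable_const.indicator (hball a))]
  apply Finset.sum_congr rfl
  intro a _
  rw [lintegral_indicator (hball a), setLIntegral_const,
    Measure.restrict_apply (hball a), Set.inter_comm]

lemma etaN_zero_of_empty (s : ℝ) (F : Set ℤ_[p]) (n : ℕ) (a : ℤ_[p])
    (h : pball p a n ∩ F = ∅) : etaN p s F a n = 0 := by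
  have hAB : proj p F ∩ proj p (pball p a n) = ∅ := by
    ext m
    simp only [Set.mem_inter_iff, Set.mem_empty_iff_false, iff_false, not_and]
    intro h1 h2
    have : (m : ℤ_[p]) ∈ pball p a n ∩ F := ⟨h2, h1⟩
    rw [h] at this
    exact this
  unfold etaN relCount
  rw [hAB]
  have : ∀ n' : ℕ, (⨆ M : ℤ, (cnt (∅ : Set ℤ) M n' : ℝ≥0∞) /
      (cnt (proj p (pball p a n)) M n' : ℝ≥0∞) ^ s) = 0 := by
    intro n'
    have hc : ∀ M : ℤ, cnt (∅ : Set ℤ) M n' = 0 := by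
      intro M
      simp [cnt]
    simp [hc]
  simp only [this]
  exact Filter.limsup_const 0

end AuxLemmasForTheoremC

noncomputable section
variable (p : ℕ) [Fact p.Prime]

/-- Theorem C: if `F ⊆ ℤ_p` is closed, `ℋ^s(F) < ∞` and `η_s(F;·,n)` is bounded
`ℋ^s`-a.e. on `F` by an `ℋ^s`-integrable function `g`, then
`θ̲*^s(F) · ℋ_s(F ∩ ℤ) ≤ ∫_F η_s(F;x) dℋ^s(x)`. -/
theorem thetaStar_mul_countingMeasure_le_integral_eta (s : ℝ) (hs : 0 < s)
    (F : Set ℤ_[p]) (hF : IsClosed F) (hfin : μH[s] F ≠ ⊤)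
    (g : ℤ_[p] → ℝ≥0∞) (hgmeas : Measurable g)
    (hgint : ∫⁻ x in F, g x ∂μH[s] ≠ ⊤)
    (hbound : ∀ᵐ x ∂((μH[s] : Measure ℤ_[p]).restrict F), ∀ n : ℕ, etaN p s F x n ≤ g x) :
    thetaStar p s F * countingMeasure s (proj p F) ≤ ∫⁻ x in F, eta p s F x ∂μH[s] := by
  classical
  have hp1 : 1 < p := (Fact.out (p := p.Prime)).one_lt
  set m : ℕ → ℝ≥0∞ := fun n =>
    ⨅ (a : ℤ) (_ : (pball p (a : ℤ_[p]) n ∩ F).Nonempty),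
      μH[s] (F ∩ pball p (a : ℤ_[p]) n) / (p : ℝ≥0∞) ^ (-((n : ℝ) * s)) with hm
  have hCq : ∀ n : ℕ, (((p^n : ℕ) : ℝ≥0∞))⁻¹ ^ s = (p : ℝ≥0∞) ^ (-((n : ℝ) * s)) := by
    intro n
    rw [Nat.cast_pow, ← ENNReal.rpow_natCast ((p:ℝ≥0∞)) n, ← ENNReal.rpow_neg,
      ← ENNReal.rpow_mul, neg_mul]
  have hqne : ∀ n : ℕ, (((p^n : ℕ)) : ℝ≥0∞) ≠ 0 := by
    intro n
    have hpos : 0 < p ^ n := Nat.pow_pos (n := n) (by omega)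
    simp only [ne_eq, Nat.cast_eq_zero]
    omega
  have hqtop : ∀ n : ℕ, (((p^n : ℕ)) : ℝ≥0∞) ≠ ⊤ := fun n => ENNReal.natCast_ne_top _
  have hCne : ∀ n : ℕ, (p : ℝ≥0∞) ^ (-((n : ℝ) * s)) ≠ 0 := by
    intro n
    rw [← hCq n]
    exact rpow_ne_zero' (by simp [ENNReal.inv_eq_zero, hqtop n])
      (by rw [ne_eq, ENNReal.inv_eq_top]; exact hqne n) s
  have hCtop : ∀ n : ℕ, (p : ℝ≥0∞) ^ (-((n : ℝ) * s)) ≠ ⊤ := by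
    intro n
    rw [← hCq n]
    exact ENNReal.rpow_ne_top_of_nonneg hs.le (by rw [ne_eq, ENNReal.inv_eq_top]; exact hqne n)
  have step1 : ∀ n : ℕ, m n * countingMeasure s (proj p F) ≤
      ∫⁻ x in F, etaN p s F x n ∂μH[s] := by
    intro n
    calc m n * countingMeasure s (proj p F)
        ≤ m n * ((((p^n:ℕ)):ℝ≥0∞)⁻¹ ^ s *
            ∑ a ∈ Finset.range (p^n), etaN p s F ((a:ℕ):ℤ_[p]) n) :=
          mul_le_mul_right (countingMeasure_le_sum s hs F n) _
      _ = ∑ a ∈ Finset.range (p^n),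
            (m n * (((p^n:ℕ)):ℝ≥0∞)⁻¹ ^ s) * etaN p s F ((a:ℕ):ℤ_[p]) n := by
          rw [← mul_assoc, Finset.mul_sum]
      _ ≤ ∑ a ∈ Finset.range (p^n),
            etaN p s F ((a:ℕ):ℤ_[p]) n * μH[s] (F ∩ pball p ((a:ℕ):ℤ_[p]) n) := by
          apply Finset.sum_le_sum
          intro a _
          rw [hCq n]
          by_cases hne : (pball p ((a:ℕ):ℤ_[p]) n ∩ F).Nonempty
          · have hcast : (((a:ℤ)) : ℤ_[p]) = ((a:ℕ) : ℤ_[p]) := by push_cast; ring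
            have h1 : m n ≤
                μH[s] (F ∩ pball p ((a:ℕ):ℤ_[p]) n) / (p:ℝ≥0∞) ^ (-((n:ℝ)*s)) := by
              have h0 : m n ≤ ⨅ (_ : (pball p (((a:ℤ)):ℤ_[p]) n ∩ F).Nonempty),
                  μH[s] (F ∩ pball p (((a:ℤ)):ℤ_[p]) n) / (p:ℝ≥0∞) ^ (-((n:ℝ)*s)) :=
                iInf_le _ (a:ℤ)
              rw [hcast] at h0
              exact h0.trans (iInf_le _ hne)
            have h2 : m n * ((p:ℝ≥0∞) ^ (-((n:ℝ)*s))) ≤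
                μH[s] (F ∩ pball p ((a:ℕ):ℤ_[p]) n) := by
              calc m n * ((p:ℝ≥0∞) ^ (-((n:ℝ)*s)))
                  ≤ (μH[s] (F ∩ pball p ((a:ℕ):ℤ_[p]) n) / (p:ℝ≥0∞) ^ (-((n:ℝ)*s))) *
                    ((p:ℝ≥0∞) ^ (-((n:ℝ)*s))) := mul_le_mul_left h1 _
                _ = μH[s] (F ∩ pball p ((a:ℕ):ℤ_[p]) n) :=
                    ENNReal.div_mul_cancel (hCne n) (hCtop n)
            calc (m n * (p:ℝ≥0∞) ^ (-((n:ℝ)*s))) * etaN p s F ((a:ℕ):ℤ_[p]) n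
                ≤ μH[s] (F ∩ pball p ((a:ℕ):ℤ_[p]) n) * etaN p s F ((a:ℕ):ℤ_[p]) n :=
                  mul_le_mul_left h2 _
              _ = etaN p s F ((a:ℕ):ℤ_[p]) n * μH[s] (F ∩ pball p ((a:ℕ):ℤ_[p]) n) :=
                  mul_comm _ _
          · have hzero : etaN p s F ((a:ℕ):ℤ_[p]) n = 0 :=
              etaN_zero_of_empty s F n _ (Set.not_nonempty_iff_eq_empty.mp hne)
            simp [hzero]
      _ = ∫⁻ x in F, etaN p s F x n ∂μH[s] := (lintegral_etaN s F n).symm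
  have step2 : thetaStar p s F * countingMeasure s (proj p F) ≤
      Filter.atTop.limsup (fun n => m n * countingMeasure s (proj p F)) := by
    have h := ENNReal.le_limsup_mul (f := Filter.atTop) (u := m)
      (v := fun _ => countingMeasure s (proj p F))
    have hts : thetaStar p s F = Filter.atTop.limsup m := rfl
    rw [hts]
    simpa [Filter.liminf_const, Pi.mul_def] using h
  calc thetaStar p s F * countingMeasure s (proj p F)
      ≤ Filter.atTop.limsup (fun n => m n * countingMeasure s (proj p F)) := step2
    _ ≤ Filter.atTop.limsup (fun n => ∫⁻ x in F, etaN p s F x n ∂μH[s]) :=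
        Filter.limsup_le_limsup (Filter.Eventually.of_forall step1)
    _ ≤ ∫⁻ x in F, eta p s F x ∂μH[s] := by
        have h := MeasureTheory.limsup_lintegral_le (μ := μH[s].restrict F)
          (f := fun n x => etaN p s F x n) g
          (fun n => etaN_measurable s F n)
          (fun n => by filter_upwards [hbound] with x hx using hx n)
          hgint
        exact h

end
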